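/- For a positively weighted undirected graph with k connected components, the largest eigenvalue λ̃_m of the renormalized Laplacian satisfies λ̃_m ≤ max_k { (d_m^{(k)}/(d_m^{(k)}+1)) λ_m^{(k)} }, where d_m^{(k)} and λ_m^{(k)} are the maximum degree and largest normalized-Laplacian eigenvalue of the k-th component; moreover, this bound is at most (d_m/(d_m+1))λ_m, where d_m and λ_m are the global maximum degree and largest eigenvalue. -/

import Mathlib

open Matrix BigOperators

noncomputable def invSqrtDiag {ι : Type*} [Fintype ι] [DecidableEq ι] (d : ι → ℝ) :
    Matrix ι ι ℝ :=
  Matrix.diagonal fun i => (Real.sqrt (d i))⁻¹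

def IsEigenvalue {ι : Type*} [Fintype ι] (M : Matrix ι ι ℝ) (μ : ℝ) : Prop :=
  ∃ v : ι → ℝ, v ≠ 0 ∧ M.mulVec v = μ • v

section aux
variable {n : Type*} [Fintype n] [DecidableEq n]

lemma dot_diag_mulVec (s x y : n → ℝ) :
    x ⬝ᵥ (Matrix.diagonal s *ᵥ y) = (fun a => s a * x a) ⬝ᵥ y := by
  simp only [dotProduct, mulVec_diagonal]
  exact Finset.sum_congr rfl fun a _ => by ring

lemma rayleigh_le {M : Matrix n n ℝ} (hM : M.IsHermitian) {lam : ℝ}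
    (hlam : ∀ μ, IsEigenvalue M μ → μ ≤ lam) (x : n → ℝ) :
    x ⬝ᵥ M *ᵥ x ≤ lam * (x ⬝ᵥ x) := by
  set N : Matrix n n ℝ := Matrix.diagonal (fun _ => lam) - M with hNdef
  have hN : N.IsHermitian := (Matrix.isHermitian_diagonal _).sub hM
  have heig : ∀ i, 0 ≤ hN.eigenvalues i := by
    intro i
    set e : n → ℝ := (WithLp.equiv 2 (n → ℝ)) (hN.eigenvectorBasis i) with he
    have hne : e ≠ 0 := by
      intro h
      exact hN.eigenvectorBasis.orthonormal.ne_zero i (by ext a; exact congrFun h a)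
    have hmv := hN.mulVec_eigenvectorBasis i
    have hM' : M *ᵥ e = (lam - hN.eigenvalues i) • e := by
      ext a
      have h1 := congrFun hmv a
      simp only [hNdef, Matrix.sub_mulVec, Pi.sub_apply, Pi.smul_apply, smul_eq_mul,
        mulVec_diagonal] at h1
      simp only [Pi.smul_apply, smul_eq_mul]
      have h2 : ((diagonal fun _ : n => lam) *ᵥ e) a = lam * e a := by
        simp [mulVec_diagonal]
      change lam * e a - (M *ᵥ e) a = hN.eigenvalues i * e a at h1
      linarith [h1, h2]
    have : lam - hN.eigenvalues i ≤ lam := hlam _ ⟨_, hne, hM'⟩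
    linarith
  have hps : N.PosSemidef := hN.posSemidef_iff_eigenvalues_nonneg.mpr heig
  have h0 := hps.dotProduct_mulVec_nonneg x
  rw [star_trivial] at h0
  have hNx : N *ᵥ x = lam • x - M *ᵥ x := by
    rw [hNdef, Matrix.sub_mulVec]
    congr 1
    ext a; simp [mulVec_diagonal]
  rw [hNx, dotProduct_sub, dotProduct_smul] at h0
  simp only [smul_eq_mul] at h0
  linarith

/-- the normalized Laplacian has eigenvalue 0 -/
lemma zero_eigen [Nonempty n] (A : Matrix n n ℝ) (d : n → ℝ)
    (hd : ∀ a, d a = ∑ b, A a b) (hdpos : ∀ a, 0 < d a) :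
    IsEigenvalue (invSqrtDiag d * (Matrix.diagonal d - A) * invSqrtDiag d) 0 := by
  refine ⟨fun a => Real.sqrt (d a), ?_, ?_⟩
  · intro h
    have := congrFun h (Classical.arbitrary n)
    simp only [Pi.zero_apply] at this
    exact absurd this (ne_of_gt (Real.sqrt_pos.mpr (hdpos _)))
  · have h1 : invSqrtDiag d *ᵥ (fun a => Real.sqrt (d a)) = fun _ => (1 : ℝ) := by
      ext a
      simp only [invSqrtDiag, mulVec_diagonal]
      exact inv_mul_cancel₀ (ne_of_gt (Real.sqrt_pos.mpr (hdpos _)))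
    rw [← Matrix.mulVec_mulVec, ← Matrix.mulVec_mulVec, h1]
    have h2 : (Matrix.diagonal d - A) *ᵥ (fun _ => (1:ℝ)) = 0 := by
      ext a
      simp [Matrix.sub_mulVec, mulVec, dotProduct, Matrix.diagonal_apply, hd a]
    rw [h2]
    ext a
    simp [mulVec]

lemma component_bound [Nonempty n]
    (A : Matrix n n ℝ) (hA : A.IsSymm)
    (d : n → ℝ) (hdpos : ∀ a, 0 < d a)
    (dmax lam : ℝ) (hdmax : ∀ a, d a ≤ dmax)
    (hlam0 : 0 ≤ lam)
    (hlam : ∀ μ, IsEigenvalue (invSqrtDiag d * (Matrix.diagonal d - A) * invSqrtDiag d) μ → μ ≤ lam)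
    {μ : ℝ}
    (hμ : IsEigenvalue (invSqrtDiag (fun a => d a + 1) *
            (Matrix.diagonal (fun a => d a + 1) - (A + 1)) *
            invSqrtDiag (fun a => d a + 1)) μ) :
    μ ≤ dmax / (dmax + 1) * lam := by
  have hdmax0 : 0 < dmax := lt_of_lt_of_le (hdpos (Classical.arbitrary n)) (hdmax _)
  obtain ⟨w, hw0, hw⟩ := hμ
  set L : Matrix n n ℝ := Matrix.diagonal d - A with hL
  have hLeq : Matrix.diagonal (fun a => d a + 1) - (A + 1) = L := by
    ext a b
    by_cases h : a = b <;>
      simp [hL, Matrix.diagonal_apply, Matrix.one_apply, h, Matrix.sub_apply, Matrix.add_apply]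
  rw [hLeq] at hw
  set u : n → ℝ := fun a => (Real.sqrt (d a + 1))⁻¹ * w a with hu
  have hd1 : ∀ a, (0:ℝ) < d a + 1 := fun a => by have := hdpos a; linarith
  have hSw : invSqrtDiag (fun a => d a + 1) *ᵥ w = u := by
    ext a; simp [invSqrtDiag, mulVec_diagonal, hu]
  -- μ * (w ⬝ w) = u ⬝ L u
  have key : μ * (w ⬝ᵥ w) = u ⬝ᵥ L *ᵥ u := by
    have h1 : w ⬝ᵥ ((invSqrtDiag (fun a => d a + 1) * L *
        invSqrtDiag (fun a => d a + 1)) *ᵥ w) = μ * (w ⬝ᵥ w) := by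
      rw [hw, dotProduct_smul]; simp
    rw [← h1, ← Matrix.mulVec_mulVec, ← Matrix.mulVec_mulVec, hSw]
    rw [invSqrtDiag, dot_diag_mulVec]
  -- Rayleigh bound on Ls
  set y : n → ℝ := fun a => Real.sqrt (d a) * u a with hy
  have hSy : invSqrtDiag d *ᵥ y = u := by
    ext a
    simp only [invSqrtDiag, mulVec_diagonal, hy]
    rw [← mul_assoc, inv_mul_cancel₀ (ne_of_gt (Real.sqrt_pos.mpr (hdpos _))), one_mul]
  have hLs : (invSqrtDiag d * L * invSqrtDiag d).IsHermitian := by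
    have hLsymm : Lᵀ = L := by
      rw [hL, Matrix.transpose_sub, Matrix.diagonal_transpose, hA]
    rw [Matrix.IsHermitian, conjTranspose_eq_transpose_of_trivial,
      Matrix.transpose_mul, Matrix.transpose_mul, hLsymm, invSqrtDiag,
      Matrix.diagonal_transpose, Matrix.mul_assoc]
  have hray : y ⬝ᵥ ((invSqrtDiag d * L * invSqrtDiag d) *ᵥ y) ≤ lam * (y ⬝ᵥ y) :=
    rayleigh_le hLs hlam y
  have hys : y ⬝ᵥ ((invSqrtDiag d * L * invSqrtDiag d) *ᵥ y) = u ⬝ᵥ L *ᵥ u := by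
    rw [← Matrix.mulVec_mulVec, ← Matrix.mulVec_mulVec, hSy, invSqrtDiag, dot_diag_mulVec]
    congr 1
    ext a
    have := congrFun hSy a
    simpa [invSqrtDiag, mulVec_diagonal, mul_comm] using this
  -- y ⬝ y ≤ dmax/(dmax+1) * (w ⬝ w)
  have hyy : y ⬝ᵥ y ≤ dmax / (dmax + 1) * (w ⬝ᵥ w) := by
    have hcomp : ∀ a, y a * y a = d a / (d a + 1) * (w a * w a) := by
      intro a
      simp only [hy, hu]
      have h1 : Real.sqrt (d a) * Real.sqrt (d a) = d a :=
        Real.mul_self_sqrt (le_of_lt (hdpos a))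
      have h2 : Real.sqrt (d a + 1) * Real.sqrt (d a + 1) = d a + 1 :=
        Real.mul_self_sqrt (le_of_lt (hd1 a))
      calc Real.sqrt (d a) * ((Real.sqrt (d a + 1))⁻¹ * w a) *
            (Real.sqrt (d a) * ((Real.sqrt (d a + 1))⁻¹ * w a))
          = (Real.sqrt (d a) * Real.sqrt (d a)) *
            (((Real.sqrt (d a + 1))⁻¹ * (Real.sqrt (d a + 1))⁻¹) * (w a * w a)) := by ring
        _ = d a * ((Real.sqrt (d a + 1) * Real.sqrt (d a + 1))⁻¹ * (w a * w a)) := by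
            rw [h1, ← mul_inv]
        _ = d a * ((d a + 1)⁻¹ * (w a * w a)) := by rw [h2]
        _ = d a / (d a + 1) * (w a * w a) := by ring
    rw [dotProduct, dotProduct, Finset.mul_sum]
    refine Finset.sum_le_sum fun a _ => ?_
    rw [hcomp a]
    have hmono : d a / (d a + 1) ≤ dmax / (dmax + 1) := by
      rw [div_le_div_iff₀ (hd1 a) (by linarith)]
      nlinarith [hdmax a]
    exact mul_le_mul_of_nonneg_right hmono (mul_self_nonneg _)
  have hwpos : 0 < w ⬝ᵥ w := by
    have hnn : 0 ≤ w ⬝ᵥ w := Finset.sum_nonneg fun a _ => mul_self_nonneg _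
    rcases lt_or_eq_of_le hnn with h | h
    · exact h
    · exact absurd (dotProduct_self_eq_zero.mp h.symm) hw0
  have : μ * (w ⬝ᵥ w) ≤ dmax / (dmax + 1) * lam * (w ⬝ᵥ w) := by
    rw [key]
    calc u ⬝ᵥ L *ᵥ u = y ⬝ᵥ ((invSqrtDiag d * L * invSqrtDiag d) *ᵥ y) := hys.symm
      _ ≤ lam * (y ⬝ᵥ y) := hray
      _ ≤ lam * (dmax / (dmax + 1) * (w ⬝ᵥ w)) := mul_le_mul_of_nonneg_left hyy hlam0
      _ = dmax / (dmax + 1) * lam * (w ⬝ᵥ w) := by ring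
  exact le_of_mul_le_mul_right this hwpos

end aux

lemma blockDiagonal'_mulVec_apply {k : ℕ} {m : Fin k → ℕ}
    (M : ∀ i : Fin k, Matrix (Fin (m i)) (Fin (m i)) ℝ)
    (v : (Σ i, Fin (m i)) → ℝ) (i : Fin k) (a : Fin (m i)) :
    (Matrix.blockDiagonal' M *ᵥ v) ⟨i, a⟩ = (M i *ᵥ fun b => v ⟨i, b⟩) a := by
  rw [mulVec, dotProduct, ← Finset.univ_sigma_univ, Finset.sum_sigma, mulVec, dotProduct]
  rw [Finset.sum_eq_single i]
  · exact Finset.sum_congr rfl fun b _ => by simp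
  · intro j _ hj
    apply Finset.sum_eq_zero
    intro b _
    rw [Matrix.blockDiagonal'_apply, dif_neg (fun h => hj h.symm), zero_mul]
  · exact fun h => absurd (Finset.mem_univ i) h

/-- For a positively weighted undirected graph with `k` connected components (block-diagonal
adjacency matrix), the largest eigenvalue of the renormalized Laplacian is bounded by the
componentwise maximum of `(d_m^{(k)}/(d_m^{(k)}+1)) λ_m^{(k)}`, which is in turn at most
`(d_m/(d_m+1)) λ_m` for the global maximum degree `d_m` and largest eigenvalue `λ_m`. -/
theorem renormalized_laplacian_componentwise_bound
    {k : ℕ} (hk : 0 < k) (m : Fin k → ℕ) (hm : ∀ i, 0 < m i)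
    (A : ∀ i : Fin k, Matrix (Fin (m i)) (Fin (m i)) ℝ)
    (hAsymm : ∀ i, (A i).IsSymm) (hAnonneg : ∀ i a b, 0 ≤ A i a b)
    (d : ∀ i : Fin k, Fin (m i) → ℝ)
    (hd : ∀ i a, d i a = ∑ b, A i a b) (hdpos : ∀ i a, 0 < d i a)
    (dmk : Fin k → ℝ) (hdmk : ∀ i, IsGreatest (Set.range (d i)) (dmk i))
    (lamk : Fin k → ℝ)
    (hlamk : ∀ i, IsGreatest
      {μ | IsEigenvalue (invSqrtDiag (d i) * (Matrix.diagonal (d i) - A i) *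
        invSqrtDiag (d i)) μ} (lamk i))
    (dm : ℝ) (hdm : dm = Finset.univ.sup' (Finset.univ_nonempty_iff.mpr ⟨⟨0, hk⟩⟩) dmk)
    (lamm : ℝ) (hlamm : lamm = Finset.univ.sup' (Finset.univ_nonempty_iff.mpr ⟨⟨0, hk⟩⟩) lamk)
    (lamt : ℝ)
    (hlamt : IsGreatest
      {μ | IsEigenvalue
        (Matrix.blockDiagonal' fun i =>
          invSqrtDiag (fun a => d i a + 1) *
            (Matrix.diagonal (fun a => d i a + 1) - (A i + 1)) *
            invSqrtDiag (fun a => d i a + 1)) μ} lamt) :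
    lamt ≤ Finset.univ.sup' (Finset.univ_nonempty_iff.mpr ⟨⟨0, hk⟩⟩)
        (fun i => dmk i / (dmk i + 1) * lamk i) ∧
    Finset.univ.sup' (Finset.univ_nonempty_iff.mpr ⟨⟨0, hk⟩⟩)
        (fun i => dmk i / (dmk i + 1) * lamk i) ≤ dm / (dm + 1) * lamm := by
  have hne : (Finset.univ : Finset (Fin k)).Nonempty :=
    Finset.univ_nonempty_iff.mpr ⟨⟨0, hk⟩⟩
  have hlam0 : ∀ i, 0 ≤ lamk i := fun i => by
    have : Nonempty (Fin (m i)) := ⟨⟨0, hm i⟩⟩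
    exact (hlamk i).2 (zero_eigen (A i) (d i) (hd i) (hdpos i))
  have hdmkpos : ∀ i, 0 < dmk i := fun i => by
    obtain ⟨a, ha⟩ := (hdmk i).1
    exact ha ▸ hdpos i a
  constructor
  · obtain ⟨v, hv0, hv⟩ := hlamt.1
    obtain ⟨p, hp⟩ : ∃ p, v p ≠ 0 := by
      by_contra h
      push_neg at h
      exact hv0 (funext h)
    obtain ⟨i, a⟩ := p
    have : Nonempty (Fin (m i)) := ⟨a⟩
    have heig : IsEigenvalue (invSqrtDiag (fun a => d i a + 1) *
        (Matrix.diagonal (fun a => d i a + 1) - (A i + 1)) *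
        invSqrtDiag (fun a => d i a + 1)) lamt := by
      refine ⟨fun b => v ⟨i, b⟩, fun h => hp (congrFun h a), ?_⟩
      ext b
      have h1 := congrFun hv ⟨i, b⟩
      rw [blockDiagonal'_mulVec_apply] at h1
      simpa using h1
    have hb := component_bound (A i) (hAsymm i) (d i) (hdpos i) (dmk i) (lamk i)
      (fun a => (hdmk i).2 ⟨a, rfl⟩) (hlam0 i) (fun μ hμ => (hlamk i).2 hμ) heig
    exact hb.trans (Finset.le_sup' (fun j => dmk j / (dmk j + 1) * lamk j) (Finset.mem_univ i))
  · rw [hdm, hlamm]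
    apply Finset.sup'_le
    intro i _
    have h1 : dmk i ≤ Finset.univ.sup' hne dmk := Finset.le_sup' _ (Finset.mem_univ i)
    have h2 : lamk i ≤ Finset.univ.sup' hne lamk := Finset.le_sup' _ (Finset.mem_univ i)
    have hD : 0 < Finset.univ.sup' hne dmk := lt_of_lt_of_le (hdmkpos i) h1
    have hdiv : dmk i / (dmk i + 1) ≤
        Finset.univ.sup' hne dmk / (Finset.univ.sup' hne dmk + 1) := by
      rw [div_le_div_iff₀ (by linarith [hdmkpos i]) (by linarith)]
      nlinarith
    exact mul_le_mul hdiv h2 (hlam0 i) (by positivity)
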